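/- Let x ∈ ℓ∞ have exactly n accumulation points with two representations x ∼_{c₀} ξ₁·1_{S₁} + ⋯ + ξₙ·1_{Sₙ} and x ∼_{c₀} η₁·1_{T₁} + ⋯ + η_m·1_{T_m}, where {S_i} and {T_j} are partitions of ℕ into infinite sets and the ξ_i (resp. η_j) are mutually distinct. Then n = m and there is a permutation σ of {1,…,n} with η_j = ξ_{σ(j)} and T_j equal to S_{σ(j)} up to a finite set, for every j. -/

import Mathlib

open Filter Topology Set

/-- The set of accumulation points of a real sequence. -/
def AccPts (x : ℕ → ℝ) : Set ℝ := {η | ∀ ε > 0, {n : ℕ | |x n - η| < ε}.Infinite}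

section aux

variable {x : ℕ → ℝ} {k : ℕ} {S : Fin k → Set ℕ} {ξ : Fin k → ℝ}

lemma sum_indicator_eq (hSdisj : Pairwise (fun i j => Disjoint (S i) (S j)))
    {i : Fin k} {l : ℕ} (hl : l ∈ S i) :
    ∑ i', (S i').indicator (fun _ => ξ i') l = ξ i := by
  rw [Finset.sum_eq_single i]
  · exact Set.indicator_of_mem hl _
  · intro j _ hj
    exact Set.indicator_of_notMem (Set.disjoint_left.mp (hSdisj hj) · hl) _
  · simp

/-- eventually, on `S i` the sequence is ε-close to `ξ i`. -/
lemma ev_close (hSdisj : Pairwise (fun i j => Disjoint (S i) (S j)))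
    (hSrep : Tendsto (fun l => x l - ∑ i, (S i).indicator (fun _ => ξ i) l) atTop (𝓝 0))
    {ε : ℝ} (hε : 0 < ε) :
    ∃ N, ∀ l ≥ N, ∀ i, l ∈ S i → |x l - ξ i| < ε := by
  have h := (Metric.tendsto_atTop.mp hSrep) ε hε
  obtain ⟨N, hN⟩ := h
  refine ⟨N, fun l hl i hi => ?_⟩
  have := hN l hl
  simpa [Real.dist_eq, sum_indicator_eq hSdisj hi] using this

lemma mem_acc (hSinf : ∀ i, (S i).Infinite)
    (hSdisj : Pairwise (fun i j => Disjoint (S i) (S j)))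
    (hSrep : Tendsto (fun l => x l - ∑ i, (S i).indicator (fun _ => ξ i) l) atTop (𝓝 0))
    (i : Fin k) : ξ i ∈ AccPts x := by
  intro ε hε
  obtain ⟨N, hN⟩ := ev_close hSdisj hSrep hε
  have : S i \ {l | l < N} ⊆ {l : ℕ | |x l - ξ i| < ε} := by
    rintro l ⟨hl, hl2⟩
    exact hN l (not_lt.mp hl2) i hl
  exact ((hSinf i).diff (Set.finite_lt_nat N)).mono this

lemma acc_subset (hSdisj : Pairwise (fun i j => Disjoint (S i) (S j)))
    (hScov : (⋃ i, S i) = Set.univ)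
    (hSrep : Tendsto (fun l => x l - ∑ i, (S i).indicator (fun _ => ξ i) l) atTop (𝓝 0)) :
    AccPts x ⊆ Set.range ξ := by
  intro μ hμ
  by_contra hμr
  have hk : Nonempty (Fin k) := by
    by_contra h
    have : (⋃ i, S i) = (∅ : Set ℕ) := by
      simp [Set.iUnion_eq_empty]
      intro i; exact absurd ⟨i⟩ h
    rw [hScov] at this
    exact (Set.univ_nonempty).ne_empty this
  obtain ⟨i₀, hi₀⟩ := Finset.exists_min_image Finset.univ (fun i => |μ - ξ i|) ⟨Classical.arbitrary _, Finset.mem_univ _⟩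
  set ε := |μ - ξ i₀| with hεdef
  have hεpos : 0 < ε := by
    rw [hεdef, abs_pos, sub_ne_zero]
    exact fun h => hμr ⟨i₀, h.symm⟩
  obtain ⟨N, hN⟩ := ev_close hSdisj hSrep (half_pos hεpos)
  have hsub : {l : ℕ | |x l - μ| < ε / 2} ⊆ {l | l < N} := by
    intro l hl
    by_contra hlN
    have hlN' : N ≤ l := not_lt.mp hlN
    obtain ⟨i, hi⟩ : ∃ i, l ∈ S i := by
      have : l ∈ ⋃ i, S i := hScov ▸ Set.mem_univ l
      exact Set.mem_iUnion.mp this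
    have h1 : |x l - ξ i| < ε / 2 := hN l hlN' i hi
    have h2 : ε ≤ |μ - ξ i| := hi₀.2 i (Finset.mem_univ i)
    have : |μ - ξ i| ≤ |x l - μ| + |x l - ξ i| := by
      have := abs_sub (x l - μ) (x l - ξ i)
      calc |μ - ξ i| = |(x l - ξ i) - (x l - μ)| := by ring_nf
        _ ≤ |x l - ξ i| + |x l - μ| := abs_sub _ _
        _ = |x l - μ| + |x l - ξ i| := by ring
    simp only [Set.mem_setOf_eq] at hl
    linarith
  have := hμ (ε / 2) (half_pos hεpos)
  exact this (Set.Finite.subset (Set.finite_lt_nat N) hsub)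

end aux

lemma inter_finite {x : ℕ → ℝ} {k k' : ℕ} {S : Fin k → Set ℕ} {ξ : Fin k → ℝ}
    {T : Fin k' → Set ℕ} {η : Fin k' → ℝ}
    (hSdisj : Pairwise (fun i j => Disjoint (S i) (S j)))
    (hSrep : Tendsto (fun l => x l - ∑ i, (S i).indicator (fun _ => ξ i) l) atTop (𝓝 0))
    (hTdisj : Pairwise (fun i j => Disjoint (T i) (T j)))
    (hTrep : Tendsto (fun l => x l - ∑ j, (T j).indicator (fun _ => η j) l) atTop (𝓝 0))
    {i : Fin k} {j : Fin k'} (hne : ξ i ≠ η j) : (S i ∩ T j).Finite := by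
  set ε := |ξ i - η j| with hεdef
  have hεpos : 0 < ε := by rw [hεdef, abs_pos, sub_ne_zero]; exact hne
  obtain ⟨N, hN⟩ := ev_close hSdisj hSrep (half_pos hεpos)
  obtain ⟨M, hM⟩ := ev_close hTdisj hTrep (half_pos hεpos)
  refine (Set.finite_lt_nat (max N M)).subset ?_
  rintro l ⟨hlS, hlT⟩
  by_contra hl
  have hl' : max N M ≤ l := not_lt.mp hl
  have h1 := hN l (le_trans (le_max_left _ _) hl') i hlS
  have h2 := hM l (le_trans (le_max_right _ _) hl') j hlT
  have : ε ≤ |x l - ξ i| + |x l - η j| := by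
    calc ε = |(x l - η j) - (x l - ξ i)| := by rw [hεdef]; ring_nf
      _ ≤ |x l - η j| + |x l - ξ i| := abs_sub _ _
      _ = |x l - ξ i| + |x l - η j| := by ring
  linarith

theorem stmt_3 (x : ℕ → ℝ) (hx : ∃ C, ∀ m, |x m| ≤ C)
    (n m : ℕ) (hxf : (AccPts x).Finite) (hxn : (AccPts x).ncard = n)
    (S : Fin n → Set ℕ) (ξ : Fin n → ℝ)
    (hSinf : ∀ i, (S i).Infinite) (hSdisj : Pairwise (fun i j => Disjoint (S i) (S j)))
    (hScov : (⋃ i, S i) = Set.univ) (hξ : Function.Injective ξ)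
    (hSrep : Tendsto (fun l => x l - ∑ i, (S i).indicator (fun _ => ξ i) l) atTop (𝓝 0))
    (T : Fin m → Set ℕ) (η : Fin m → ℝ)
    (hTinf : ∀ j, (T j).Infinite) (hTdisj : Pairwise (fun i j => Disjoint (T i) (T j)))
    (hTcov : (⋃ j, T j) = Set.univ) (hη : Function.Injective η)
    (hTrep : Tendsto (fun l => x l - ∑ j, (T j).indicator (fun _ => η j) l) atTop (𝓝 0)) :
    n = m ∧ ∃ σ : Fin m → Fin n, Function.Bijective σ ∧
      ∀ j, η j = ξ (σ j) ∧ (symmDiff (T j) (S (σ j))).Finite := by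
  have hSacc : AccPts x = Set.range ξ :=
    le_antisymm (acc_subset hSdisj hScov hSrep)
      (by rintro _ ⟨i, rfl⟩; exact mem_acc hSinf hSdisj hSrep i)
  have hTacc : AccPts x = Set.range η :=
    le_antisymm (acc_subset hTdisj hTcov hTrep)
      (by rintro _ ⟨j, rfl⟩; exact mem_acc hTinf hTdisj hTrep j)
  have hrange : Set.range ξ = Set.range η := hSacc ▸ hTacc
  have hnm : n = m := by
    have h1 : (Set.range ξ).ncard = n := by
      rw [← Set.image_univ, Set.ncard_image_of_injective _ hξ, Set.ncard_univ]; simp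
    have h2 : (Set.range η).ncard = m := by
      rw [← Set.image_univ, Set.ncard_image_of_injective _ hη, Set.ncard_univ]; simp
    rw [← h1, hrange, h2]
  refine ⟨hnm, ?_⟩
  have hσ : ∀ j : Fin m, ∃ i : Fin n, ξ i = η j := by
    intro j
    have : η j ∈ Set.range ξ := hrange ▸ Set.mem_range_self j
    exact this
  choose σ hσ' using hσ
  have hσinj : Function.Injective σ := by
    intro j₁ j₂ h
    apply hη
    rw [← hσ' j₁, ← hσ' j₂, h]
  have hσbij : Function.Bijective σ := by
    rw [Fintype.bijective_iff_injective_and_card]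
    exact ⟨hσinj, by simp [hnm]⟩
  refine ⟨σ, hσbij, fun j => ⟨(hσ' j).symm, ?_⟩⟩
  rw [Set.symmDiff_def]
  apply Set.Finite.union
  · -- T j \ S (σ j)
    have hsub : T j \ S (σ j) ⊆ ⋃ i : Fin n, (S i ∩ T j) \ S (σ j) := by
      rintro l ⟨hlT, hlS⟩
      obtain ⟨i, hi⟩ : ∃ i, l ∈ S i := Set.mem_iUnion.mp (hScov ▸ Set.mem_univ l)
      exact Set.mem_iUnion.mpr ⟨i, ⟨hi, hlT⟩, hlS⟩
    refine Set.Finite.subset (Set.finite_iUnion fun i => ?_) hsub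
    rcases eq_or_ne i (σ j) with rfl | hi
    · refine Set.Finite.subset Set.finite_empty ?_
      rintro l ⟨⟨h1, _⟩, h2⟩; exact absurd h1 h2
    · have hne : ξ i ≠ η j := fun h => hi (hξ (h.trans (hσ' j).symm))
      exact (inter_finite hSdisj hSrep hTdisj hTrep hne).diff
  · -- S (σ j) \ T j
    have hsub : S (σ j) \ T j ⊆ ⋃ j' : Fin m, (S (σ j) ∩ T j') \ T j := by
      rintro l ⟨hlS, hlT⟩
      obtain ⟨j', hj'⟩ : ∃ j', l ∈ T j' := Set.mem_iUnion.mp (hTcov ▸ Set.mem_univ l)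
      exact Set.mem_iUnion.mpr ⟨j', ⟨hlS, hj'⟩, hlT⟩
    refine Set.Finite.subset (Set.finite_iUnion fun j' => ?_) hsub
    rcases eq_or_ne j' j with rfl | hj
    · refine Set.Finite.subset Set.finite_empty ?_
      rintro l ⟨⟨_, h1⟩, h2⟩; exact absurd h1 h2
    · have hne : ξ (σ j) ≠ η j' := by
        rw [hσ' j]; exact fun h => hj (hη h).symm
      exact (inter_finite hSdisj hSrep hTdisj hTrep hne).diff
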